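/- The backward-lifted TSP-optimality cut x(A(P)) + x(∪_{h=2}^{p} Δ⁻_h(P)) ≤ |A(P)| - 1 is valid for every feasible solution of F-CVRP-TSP, where Δ⁻_h(P) = Δ^{E,-}_h(P) ∪ Δ^{TSP,-}_h(P) ∪ Δ^{Q,-}_h(P). -/

import Mathlib

variable {V : Type*}

/-- The list of arcs (consecutive node pairs) of a node list. -/
def arcsOf (l : List V) : List (V × V) := l.zip l.tail

/-- The length of a path given as a node list: the sum of its arc distances. -/
def plen (d : V → V → ℝ) (l : List V) : ℝ :=
  ((arcsOf l).map (fun a => d a.1 a.2)).sum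

/-- A path is TSP-violating if some path on the same node set with
the same endpoints is strictly shorter. -/
def TSPviolating (d : V → V → ℝ) (P : List V) : Prop :=
  ∃ Q : List V, Q.Perm P ∧ Q.head? = P.head? ∧ Q.getLast? = P.getLast? ∧
    plen d Q < plen d P

/-- Length of the route visiting customers `c` in order,
starting and ending at the depot. -/
def routeLen (d : V → V → ℝ) (depot : V) (c : List V) : ℝ :=
  plen d (depot :: c ++ [depot])

/-- A route (given by its ordered customer list) is TSP-optimal:
no reordering of its customers gives a strictly shorter route. -/
def TSPopt (d : V → V → ℝ) (depot : V) (c : List V) : Prop :=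
  ∀ c' : List V, c'.Perm c → routeLen d depot c ≤ routeLen d depot c'

/-- Arc flow of a set of selected routes: the number of selected routes using arc `a`. -/
def flow [DecidableEq V] (depot : V) (routes : List (List V)) (a : V × V) : ℤ :=
  (routes.map (fun c => ((arcsOf (depot :: c ++ [depot])).count a : ℤ))).sum

/-- The node list `[v 1, …, v p]` of an indexed path. -/
def pathList (v : ℕ → V) (p : ℕ) : List V := (List.range p).map (fun i => v (i + 1))

/-- The node list `[v h, …, v p]` of a suffix of an indexed path. -/
def suffixList (v : ℕ → V) (h p : ℕ) : List V :=
  (List.range (p + 1 - h)).map (fun i => v (h + i))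

/-- Backward elementarity lifting set `Δ^{E,-}_h(P)`. -/
def deltaEB (depot : V) (v : ℕ → V) (h p : ℕ) : Set (V × V) :=
  {a | ∃ j, h + 1 ≤ j ∧ j ≤ p ∧ a = (v j, v h) ∧ v j ≠ depot}

/-- Backward TSP-optimality lifting set `Δ^{TSP,-}_h(P)`. -/
def deltaTSPB (d : V → V → ℝ) (v : ℕ → V) (h p : ℕ) : Set (V × V) :=
  {a | ∃ j : V, (∀ i, h - 1 ≤ i → i ≤ p → j ≠ v i) ∧ a = (j, v h) ∧
    TSPviolating d (j :: suffixList v h p)}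

/-- Backward capacity lifting set `Δ^{Q,-}_h(P)`. -/
def deltaQB (dem : V → ℝ) (Qcap : ℝ) (v : ℕ → V) (h p : ℕ) : Set (V × V) :=
  {a | ∃ j : V, (∀ i, h - 1 ≤ i → i ≤ p → j ≠ v i) ∧ a = (j, v h) ∧
    Qcap < dem j + ∑ i ∈ Finset.Icc h p, dem (v i)}

-- ## Auxiliary lemmas
-- ## arcsOf basics
theorem arcsOf_cons_cons (a b : V) (t : List V) :
    arcsOf (a :: b :: t) = (a, b) :: arcsOf (b :: t) := rfl
theorem infix_of_mem_arcsOf {x y : V} : ∀ {l : List V}, (x, y) ∈ arcsOf l → [x, y] <:+: l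
  | [], h => by simp [arcsOf] at h
  | [a], h => by simp [arcsOf] at h
  | a :: b :: t, h => by
    rw [arcsOf_cons_cons] at h
    rcases List.mem_cons.1 h with h | h
    · obtain ⟨rfl, rfl⟩ := Prod.mk.inj h
      exact ⟨[], t, rfl⟩
    · exact (infix_of_mem_arcsOf h).trans ⟨[a], [], by simp⟩
theorem mem_arcsOf_of_infix {x y : V} {l : List V} (h : [x, y] <:+: l) :
    (x, y) ∈ arcsOf l := by
  obtain ⟨s, t, rfl⟩ := h
  induction s with
  | nil => rw [List.nil_append, List.cons_append, List.cons_append, arcsOf_cons_cons]; exact List.mem_cons_self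
  | cons a s ih =>
    have hne : s ++ [x, y] ++ t ≠ [] := by simp
    obtain ⟨b, u, hbu⟩ := List.exists_cons_of_ne_nil hne
    rw [List.cons_append, List.cons_append] at *
    rw [hbu, arcsOf_cons_cons, ← hbu]
    exact List.mem_cons_of_mem _ ih
theorem mem_arcsOf_of_infix' {P l : List V} (hPl : P <:+: l) {x y : V}
    (h : (x, y) ∈ arcsOf P) : (x, y) ∈ arcsOf l :=
  mem_arcsOf_of_infix ((infix_of_mem_arcsOf h).trans hPl)
theorem snd_mem_tail_of_mem_arcsOf {x y : V} {l : List V} (h : (x, y) ∈ arcsOf l) :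
    y ∈ l.tail := (List.of_mem_zip h).2
theorem pred_unique [DecidableEq V] {y x₁ x₂ : V} :
    ∀ {l : List V}, l.count y ≤ 1 →
    (x₁, y) ∈ arcsOf l → (x₂, y) ∈ arcsOf l → x₁ = x₂
  | [], _, h, _ => by simp [arcsOf] at h
  | [a], _, h, _ => by simp [arcsOf] at h
  | a :: b :: t, hc, h1, h2 => by
    rw [arcsOf_cons_cons] at h1 h2
    have hcount : (b :: t).count y ≤ (a :: b :: t).count y := by
      rw [List.count_cons (a := y) (b := a)]; omega
    rcases List.mem_cons.1 h1 with h1 | h1 <;> rcases List.mem_cons.1 h2 with h2 | h2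
    · rw [Prod.mk.injEq] at h1 h2; exact h1.1.trans h2.1.symm
    · exfalso
      have hb : y = b := (Prod.mk.inj h1).2
      have hyt : y ∈ t := by
        have := snd_mem_tail_of_mem_arcsOf h2; rw [← hb] at this; exact this
      have h2c : 2 ≤ (a :: b :: t).count y := by
        have h1c := List.count_pos_iff.2 hyt
        rw [List.count_cons (a := y) (b := a), List.count_cons (a := y) (b := b), ← hb]
        simp; omega
      omega
    · exfalso
      have hb : y = b := (Prod.mk.inj h2).2
      have hyt : y ∈ t := by
        have := snd_mem_tail_of_mem_arcsOf h1; rw [← hb] at this; exact this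
      have h2c : 2 ≤ (a :: b :: t).count y := by
        have h1c := List.count_pos_iff.2 hyt
        rw [List.count_cons (a := y) (b := a), List.count_cons (a := y) (b := b), ← hb]
        simp; omega
      omega
    · exact pred_unique (le_trans hcount hc) h1 h2
-- ## plen
def jn (d : V → V → ℝ) : Option V → Option V → ℝ
  | some a, some b => d a b
  | _, _ => 0
@[simp] theorem jn_none_left (d : V → V → ℝ) (o : Option V) : jn d none o = 0 := by
  cases o <;> rfl
@[simp] theorem jn_none_right (d : V → V → ℝ) (o : Option V) : jn d o none = 0 := by
  cases o <;> rfl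
@[simp] theorem plen_nil (d : V → V → ℝ) : plen d [] = 0 := rfl
@[simp] theorem plen_single (d : V → V → ℝ) (a : V) : plen d [a] = 0 := rfl
theorem plen_cons (d : V → V → ℝ) (a : V) (l : List V) :
    plen d (a :: l) = jn d (some a) l.head? + plen d l := by
  cases l with
  | nil => simp [jn]
  | cons b t => rw [plen, arcsOf_cons_cons]; simp [plen, jn]
theorem plen_append (d : V → V → ℝ) (l₁ l₂ : List V) :
    plen d (l₁ ++ l₂) = plen d l₁ + jn d l₁.getLast? l₂.head? + plen d l₂ := by
  induction l₁ with
  | nil => simp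
  | cons a l₁ ih =>
    rw [List.cons_append, plen_cons, plen_cons, ih]
    cases l₁ with
    | nil => simp
    | cons b t =>
      rw [List.head?_append_of_ne_nil _ (by simp)]
      rw [List.getLast?_cons_cons]
      ring
-- ## TSP violation lemmas
theorem not_violating_pair (d : V → V → ℝ) (a b : V) : ¬ TSPviolating d [a, b] := by
  rintro ⟨Q, hperm, hhead, hlast, hlt⟩
  cases Q with
  | nil => simp at hhead
  | cons q Q' =>
    have hq : q = a := by simpa using hhead
    subst hq
    have : Q'.Perm [b] := hperm.cons_inv
    rw [List.perm_singleton.1 this] at hlt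
    exact lt_irrefl _ hlt
theorem getLast?_append_of_ne_nil' {l₁ l₂ : List V} (h : l₂ ≠ []) :
    (l₁ ++ l₂).getLast? = l₂.getLast? := by
  rw [List.getLast?_append, List.getLast?_eq_getLast h]; rfl
theorem eq_cons_append_of_head_getLast {l : List V} {a b : V}
    (hh : l.head? = some a) (hl : l.getLast? = some b) (hlen : 2 ≤ l.length) :
    ∃ m, l = a :: m ++ [b] := by
  cases l with
  | nil => simp at hh
  | cons x u =>
    have hx : x = a := by simpa using hh
    subst hx
    have hu : u ≠ [] := by
      cases u with
      | nil => simp at hlen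
      | cons _ _ => simp
    have h2 : u.getLast? = some (u.getLast hu) := List.getLast?_eq_getLast hu
    have hlast : u.getLast hu = b := by
      rw [List.getLast?_cons, h2] at hl
      simpa using hl
    refine ⟨u.dropLast, ?_⟩
    rw [← hlast]
    exact congrArg (List.cons _) (List.dropLast_append_getLast hu).symm
theorem no_viol_infix [DecidableEq V] (d : V → V → ℝ) (depot : V) {c : List V}
    (hopt : TSPopt d depot c) {P : List V} (hP : TSPviolating d P)
    (hinf : P <:+: depot :: c ++ [depot]) : False := by
  obtain ⟨Q, hperm, hhead, hlast, hlt⟩ := hP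
  obtain ⟨s, t, hst⟩ := hinf
  cases P with
  | nil =>
    rw [List.perm_nil.1 hperm] at hlt
    exact lt_irrefl _ hlt
  | cons x P' =>
  set P : List V := x :: P' with hPdef
  have hPne : P ≠ [] := by simp [hPdef]
  have hQne : Q ≠ [] := by
    intro h; subst h; exact hPne (List.perm_nil.1 hperm.symm)
  set r : List V := depot :: c ++ [depot] with hrdef
  set r' : List V := s ++ Q ++ t with hr'def
  have hplen : plen d r' < plen d r := by
    rw [← hst, hr'def]
    rw [List.append_assoc, List.append_assoc, plen_append d s _, plen_append d s _,
      plen_append d Q t, plen_append d P t,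
      List.head?_append_of_ne_nil Q hQne, List.head?_append_of_ne_nil P hPne,
      hhead, hlast]
    linarith
  have hperm' : r'.Perm r := by
    rw [← hst, hr'def]
    simpa [List.append_assoc] using ((hperm.append_right t).append_left s)
  have hhead' : r'.head? = some depot := by
    have h1 : r.head? = some depot := by simp [hrdef]
    cases s with
    | nil =>
      have hPh : P.head? = some depot := by
        rw [← h1, ← hst]; simp [List.head?_append_of_ne_nil P hPne]
      simp only [hr'def, List.nil_append]
      rw [List.head?_append_of_ne_nil Q hQne, hhead, hPh]
    | cons a s' =>
      have ha : a = depot := by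
        have h3 := hst; rw [hrdef] at h3
        simpa using congrArg List.head? h3
      simp [hr'def, ha]
  have hlast' : r'.getLast? = some depot := by
    have h1 : r.getLast? = some depot := by
      rw [hrdef, List.cons_append, List.getLast?_cons, List.getLast?_concat]; rfl
    rcases eq_or_ne t [] with rfl | htne
    · have hPl : P.getLast? = some depot := by
        rw [← h1, ← hst, List.append_nil, getLast?_append_of_ne_nil' hPne]
      rw [hr'def, List.append_nil, getLast?_append_of_ne_nil' hQne, hlast, hPl]
    · rw [hr'def, List.append_assoc,
        getLast?_append_of_ne_nil' (by simp [htne] : Q ++ t ≠ []),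
        getLast?_append_of_ne_nil' htne, ← h1, ← hst, List.append_assoc,
        getLast?_append_of_ne_nil' (by simp [htne] : P ++ t ≠ []),
        getLast?_append_of_ne_nil' htne]
  have hlen2 : 2 ≤ r'.length := by
    have := hperm'.length_eq
    rw [this, hrdef]
    simp
  obtain ⟨c', hc'⟩ := eq_cons_append_of_head_getLast hhead' hlast' hlen2
  have hcc' : c'.Perm c := by
    rw [List.perm_iff_count]
    intro a
    have hcnt := hperm'.count_eq a
    rw [hc', hrdef] at hcnt
    simp only [List.count_cons, List.count_append, List.count_singleton,
      List.count_nil] at hcnt ⊢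
    split_ifs at hcnt <;> omega
  have h1 := hopt c' hcc'
  have h2 : routeLen d depot c' = plen d r' := by rw [routeLen, hc']
  have h3 : routeLen d depot c = plen d r := rfl
  rw [h2, h3] at h1
  linarith
-- ## counting lemmas
theorem sum_count_eq {α : Type*} [BEq α] [LawfulBEq α] [DecidableEq α] (A : List α) (F : Finset α) :
    ∑ a ∈ F, A.count a = (A.filter (fun x => x ∈ F)).length := by
  induction A with
  | nil => simp
  | cons b A ih =>
    rw [List.filter_cons]
    simp only [List.count_cons, Finset.sum_add_distrib, ih]
    have h1 : (∑ a ∈ F, if b == a then (1:ℕ) else 0) = if b ∈ F then 1 else 0 := by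
      simp only [beq_iff_eq]
      exact Finset.sum_ite_eq F b (fun _ => 1)
    rw [h1]
    by_cases hb : b ∈ F <;> simp [hb]
theorem count_le_countP {α : Type*} [BEq α] [LawfulBEq α] (A : List α) (a : α) (q : α → Bool)
    (hq : q a) : A.count a ≤ A.countP q := by
  rw [List.count]
  exact List.countP_mono_left (fun x _ hx => by rw [beq_iff_eq] at hx; rwa [hx])
theorem countP_snd_arcsOf [DecidableEq V] (y : V) : ∀ (l : List V),
    (arcsOf l).countP (fun a => a.2 == y) = l.tail.count y
  | [] => rfl
  | [a] => rfl
  | a :: b :: t => by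
    rw [arcsOf_cons_cons, List.countP_cons, countP_snd_arcsOf y (b :: t)]
    simp [List.count_cons, List.tail]
theorem countP_fst_arcsOf [DecidableEq V] (x : V) : ∀ (l : List V),
    (arcsOf l).countP (fun a => a.1 == x) = l.dropLast.count x
  | [] => rfl
  | [a] => rfl
  | a :: b :: t => by
    rw [arcsOf_cons_cons, List.countP_cons, countP_fst_arcsOf x (b :: t),
      List.dropLast_cons₂]
    simp [List.count_cons]
-- ## suffixList lemmas
theorem suffixList_cons (v : ℕ → V) {k p : ℕ} (hk : k ≤ p) :
    suffixList v k p = v k :: suffixList v (k + 1) p := by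
  have h1 : p + 1 - k = (p + 1 - (k + 1)) + 1 := by omega
  rw [suffixList, h1, List.range_succ_eq_map, List.map_cons, List.map_map]
  refine congrArg₂ _ (by simp) ?_
  rw [suffixList]
  congr 1
  funext i
  simp [Nat.succ_eq_add_one]
  ring_nf
theorem suffixList_last (v : ℕ → V) (p : ℕ) : suffixList v p p = [v p] := by
  have : p + 1 - p = 1 := by omega
  rw [suffixList, this]
  rfl
theorem mem_suffixList (v : ℕ → V) {k p m : ℕ} (h1 : k ≤ m) (h2 : m ≤ p) :
    v m ∈ suffixList v k p := by
  rw [suffixList]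
  refine List.mem_map.2 ⟨m - k, List.mem_range.2 (by omega), by rw [Nat.add_sub_cancel' h1]⟩
theorem suffixList_one (v : ℕ → V) (p : ℕ) : suffixList v 1 p = pathList v p := by
  rw [suffixList, pathList]
  have : p + 1 - 1 = p := by omega
  rw [this]
  congr 1
  funext i
  rw [Nat.add_comm]
theorem suffixList_map_sum (v : ℕ → V) (dem : V → ℝ) {k p : ℕ} :
    ((suffixList v k p).map (fun u => dem u)).sum = ∑ i ∈ Finset.Icc k p, dem (v i) := by
  have h1 : ((suffixList v k p).map (fun u => dem u)).sum
      = ∑ i ∈ Finset.range (p + 1 - k), dem (v (k + i)) := by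
    rw [suffixList, List.map_map]; rfl
  rw [h1, ← Finset.Ico_add_one_right_eq_Icc]
  exact (Finset.sum_Ico_eq_sum_range (fun i => dem (v i)) k (p + 1)).symm
-- ## remaining defs
-- ## helpers
theorem count_route [DecidableEq V] {depot y : V} (hyd : y ≠ depot) (c : List V) :
    (depot :: c ++ [depot]).count y = c.count y := by
  simp [List.count_cons, List.count_append, Ne.symm hyd, hyd]
theorem cap_contra [DecidableEq V] {dem : V → ℝ} {Qcap : ℝ} {depot : V} {c L : List V}
    (hdem0 : dem depot = 0) (hpos : ∀ u : V, u ≠ depot → 0 < dem u)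
    (hcap : (c.map dem).sum ≤ Qcap)
    (hsub : L.Sublist (depot :: c ++ [depot])) :
    (L.map dem).sum ≤ Qcap := by
  have h0 : ∀ x ∈ depot :: c ++ [depot], 0 ≤ dem x := by
    intro x hx
    rcases eq_or_ne x depot with rfl | hxd
    · rw [hdem0]
    · exact (hpos x hxd).le
  have h1 : (L.map dem).Sublist ((depot :: c ++ [depot]).map dem) := hsub.map dem
  have h2 := h1.sum_le_sum (by
    intro a ha; obtain ⟨x, hx, rfl⟩ := List.mem_map.1 ha; exact h0 x hx)
  calc (L.map dem).sum ≤ ((depot :: c ++ [depot]).map dem).sum := h2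
    _ = (c.map dem).sum := by simp [hdem0]
    _ ≤ Qcap := hcap
theorem exists_route_of_flow_pos [DecidableEq V] {depot : V} {routes : List (List V)}
    {a : V × V} (h : 0 < flow depot routes a) :
    ∃ c ∈ routes, a ∈ arcsOf (depot :: c ++ [depot]) := by
  by_contra hcon
  push_neg at hcon
  have h0 : flow depot routes a = 0 := by
    rw [flow]
    apply List.sum_eq_zero
    intro x hx
    obtain ⟨c, hc, rfl⟩ := List.mem_map.1 hx
    rw [List.count_eq_zero.2 (hcon c hc)]
    rfl
  rw [h0] at h
  exact lt_irrefl _ h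
theorem mem_unique_of_sum_eq_one {α : Type*} {f : α → ℤ} :
    ∀ {l : List α}, (∀ x ∈ l, 0 ≤ f x) → (l.map f).sum = 1 → ∀ {a b : α},
    a ∈ l → b ∈ l → 1 ≤ f a → 1 ≤ f b → a = b
  | [], _, _, _, _, ha, _, _, _ => absurd ha List.not_mem_nil
  | x :: l, h0, h1, a, b, ha, hb, hfa, hfb => by
    rw [List.map_cons, List.sum_cons] at h1
    have h0' : ∀ z ∈ l, 0 ≤ f z := fun z hz => h0 z (List.mem_cons_of_mem _ hz)
    have hmap0 : ∀ y ∈ l.map f, 0 ≤ y := by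
      intro y hy
      obtain ⟨z, hz, rfl⟩ := List.mem_map.1 hy
      exact h0' z hz
    have hnn : 0 ≤ (l.map f).sum := List.sum_nonneg hmap0
    rcases List.mem_cons.1 ha with rfl | ha' <;> rcases List.mem_cons.1 hb with rfl | hb'
    · rfl
    · exfalso
      have := List.single_le_sum hmap0 _ (List.mem_map_of_mem hb')
      linarith
    · exfalso
      have := List.single_le_sum hmap0 _ (List.mem_map_of_mem ha')
      linarith
    · have hx0 : 0 ≤ f x := h0 x List.mem_cons_self
      have hsum : (l.map f).sum = 1 := by
        have h2 := List.single_le_sum hmap0 _ (List.mem_map_of_mem ha')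
        omega
      exact mem_unique_of_sum_eq_one h0' hsum ha' hb' hfa hfb
theorem same_route [DecidableEq V] {routes : List (List V)} {u : V}
    (hcov : (routes.map (fun c => (c.count u : ℤ))).sum = 1)
    {c c' : List V} (hc : c ∈ routes) (hc' : c' ∈ routes)
    (hu : u ∈ c) (hu' : u ∈ c') : c = c' :=
  mem_unique_of_sum_eq_one (f := fun c => (c.count u : ℤ))
    (fun x _ => by positivity) hcov hc hc'
    (by exact_mod_cast List.count_pos_iff.2 hu)
    (by exact_mod_cast List.count_pos_iff.2 hu')
-- ## the backward induction
theorem lifted_used_false [DecidableEq V] (d : V → V → ℝ) (depot : V) (dem : V → ℝ)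
    (Qcap : ℝ)
    (hdem0 : dem depot = 0) (hpos : ∀ u : V, u ≠ depot → 0 < dem u)
    (routes : List (List V))
    (hnd : ∀ c ∈ routes, c.Nodup)
    (hcap : ∀ c ∈ routes, (c.map dem).sum ≤ Qcap)
    (hcover : ∀ u : V, u ≠ depot → (routes.map (fun c => (c.count u : ℤ))).sum = 1)
    (hopt : ∀ c ∈ routes, TSPopt d depot c)
    (p : ℕ) (hp : 2 ≤ p) (v : ℕ → V)
    (hinj : ∀ i j, 1 ≤ i → i ≤ p → 1 ≤ j → j ≤ p → v i = v j → i = j)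
    (hmid : ∀ i, 2 ≤ i → i ≤ p - 1 → v i ≠ depot)
    (hviol : TSPviolating d (pathList v p))
    (hUsed : ∀ k, 2 ≤ k → k ≤ p → ∃ a : V × V, 0 < flow depot routes a ∧
      (a = (v (k - 1), v k) ∨
        a ∈ deltaEB depot v k p ∪ deltaTSPB d v k p ∪ deltaQB dem Qcap v k p)) :
    False := by
  have key : ∀ n, n ≤ p - 2 →
      ∃ c ∈ routes, suffixList v (p - 1 - n) p <:+: depot :: c ++ [depot] := by
    intro n
    induction n with
    | zero =>
      intro _
      obtain ⟨a, hfa, hsh⟩ := hUsed p hp le_rfl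
      obtain ⟨c, hc, hmem⟩ := exists_route_of_flow_pos hfa
      have harith : p - 1 - 0 = p - 1 := by omega
      rcases hsh with rfl | hS
      · refine ⟨c, hc, ?_⟩
        rw [harith, suffixList_cons v (by omega : p - 1 ≤ p),
          (by omega : p - 1 + 1 = p), suffixList_last]
        exact infix_of_mem_arcsOf hmem
      · exfalso
        rcases hS with (hE | hT) | hQ
        · obtain ⟨j, hj1, hj2, _, _⟩ := hE; omega
        · obtain ⟨j, hji, rfl, hviol2⟩ := hT
          rw [suffixList_last] at hviol2
          exact not_violating_pair d j (v p) hviol2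
        · obtain ⟨j, hji, rfl, hcap2⟩ := hQ
          have hsub : [j, v p].Sublist (depot :: c ++ [depot]) :=
            (infix_of_mem_arcsOf hmem).sublist
          have hle := cap_contra hdem0 hpos (hcap c hc) hsub
          rw [Finset.Icc_self, Finset.sum_singleton] at hcap2
          simp only [List.map_cons, List.map_nil, List.sum_cons, List.sum_nil,
            add_zero] at hle
          linarith
    | succ n ih =>
      intro hn1
      set k := p - 1 - n with hk
      have hk2 : 2 ≤ k := by omega
      have hkp1 : k ≤ p - 1 := by omega
      have hkp : k ≤ p := by omega
      obtain ⟨c, hc, hinf⟩ := ih (by omega)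
      have hkd : v k ≠ depot := hmid k hk2 hkp1
      obtain ⟨a, hfa, hsh⟩ := hUsed k hk2 hkp
      obtain ⟨c', hc', hmem⟩ := exists_route_of_flow_pos hfa
      have hmain : ∀ x : V, a = (x, v k) →
          (x :: suffixList v k p) <:+: (depot :: c ++ [depot]) := by
        intro x hax
        subst hax
        have h1 : v k ∈ c' := by
          have h2 : v k ∈ c' ++ [depot] := snd_mem_tail_of_mem_arcsOf hmem
          rcases List.mem_append.1 h2 with h3 | h3
          · exact h3
          · exact absurd (List.mem_singleton.1 h3) hkd
        have h3 : v k ∈ c := by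
          have h4 : v k ∈ suffixList v k p := mem_suffixList v le_rfl hkp
          have h5 := hinf.sublist.subset h4
          rcases List.mem_cons.1 h5 with h6 | h6
          · exact absurd h6 hkd
          · rcases List.mem_append.1 h6 with h7 | h7
            · exact h7
            · exact absurd (List.mem_singleton.1 h7) hkd
        have hcc' : c = c' := same_route (hcover (v k) hkd) hc hc' h3 h1
        rw [← hcc'] at hmem
        have hcnt : (depot :: c ++ [depot]).count (v k) = 1 := by
          rw [count_route hkd]
          exact List.count_eq_one_of_mem (hnd c hc) h3
        rw [suffixList_cons v hkp] at hinf ⊢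
        obtain ⟨s, t, hst⟩ := hinf
        have hsne : s ≠ [] := by
          intro h
          subst h
          rw [List.nil_append] at hst
          have h8 := congrArg List.head? hst
          rw [List.head?_append_of_ne_nil _ (by simp)] at h8
          simp at h8
          exact hkd h8
        obtain ⟨w, s₀, hws⟩ : ∃ w s₀, s = s₀ ++ [w] :=
          ⟨s.getLast hsne, s.dropLast, (List.dropLast_append_getLast hsne).symm⟩
        subst hws
        have harc : (w, v k) ∈ arcsOf (depot :: c ++ [depot]) := by
          apply mem_arcsOf_of_infix
          exact ⟨s₀, suffixList v (k + 1) p ++ t, by rw [← hst]; simp⟩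
        have hwx : x = w := pred_unique (le_of_eq hcnt) hmem harc
        subst hwx
        exact ⟨s₀, t, by rw [← hst]; simp⟩
      rcases hsh with haq | hS
      · refine ⟨c, hc, ?_⟩
        have harith : p - 1 - (n + 1) = k - 1 := by omega
        rw [harith, suffixList_cons v (by omega : k - 1 ≤ p),
          (by omega : k - 1 + 1 = k)]
        exact hmain (v (k - 1)) haq
      · exfalso
        rcases hS with (hE | hT) | hQ
        · obtain ⟨j, hj1, hj2, haq, hjd⟩ := hE
          have h6 := hmain (v j) haq
          have hsb := h6.sublist
          have hcnt2 : 2 ≤ (v j :: suffixList v k p).count (v j) := by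
            rw [List.count_cons]
            have h7 : 0 < (suffixList v k p).count (v j) :=
              List.count_pos_iff.2 (mem_suffixList v (by omega) (by omega))
            simp only [beq_self_eq_true, if_true]
            omega
          have hcnt3 := hsb.count_le (v j)
          have hle : (depot :: c ++ [depot]).count (v j) ≤ 1 := by
            rw [count_route hjd]
            exact List.nodup_iff_count_le_one.1 (hnd c hc) (v j)
          omega
        · obtain ⟨j, hji, haq, hviol2⟩ := hT
          exact no_viol_infix d depot (hopt c hc) hviol2 (hmain j haq)
        · obtain ⟨j, hji, haq, hcap2⟩ := hQ
          have h6 := hmain j haq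
          have hsum := cap_contra hdem0 hpos (hcap c hc) h6.sublist
          rw [List.map_cons, List.sum_cons, suffixList_map_sum] at hsum
          linarith
  obtain ⟨c, hc, hinf⟩ := key (p - 2) le_rfl
  rw [(by omega : p - 1 - (p - 2) = 1), suffixList_one] at hinf
  exact no_viol_infix d depot (hopt c hc) hviol hinf
theorem sum_nat_eq_one {α : Type*} {l : List α} {f : α → ℕ}
    (h : (l.map (fun x => (f x : ℤ))).sum = 1) : (l.map f).sum = 1 := by
  have h2 : ((l.map f).sum : ℤ) = (l.map (fun x => (f x : ℤ))).sum := by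
    rw [Nat.cast_list_sum, List.map_map]
    rfl
  rw [h] at h2
  exact_mod_cast h2
theorem snd_of_mem_delta {d : V → V → ℝ} {dem : V → ℝ} {Qcap : ℝ} {depot : V}
    {v : ℕ → V} {h p : ℕ} {a : V × V}
    (ha : a ∈ deltaEB depot v h p ∪ deltaTSPB d v h p ∪ deltaQB dem Qcap v h p) :
    a.2 = v h := by
  rcases ha with (h1 | h1) | h1
  · obtain ⟨j, _, _, rfl, _⟩ := h1; rfl
  · obtain ⟨j, _, rfl, _⟩ := h1; rfl
  · obtain ⟨j, _, rfl, _⟩ := h1; rfl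

/-- the backward-lifted TSP-optimality cut
`x(A(P)) + x(⋃_{h=2}^{p} Δ⁻_h(P)) ≤ |A(P)| - 1` is valid for every feasible
solution of F-CVRP-TSP. -/
theorem backward_lifted_cut_valid [DecidableEq V]
    (d : V → V → ℝ) (depot : V) (dem : V → ℝ) (Qcap : ℝ)
    (hdem0 : dem depot = 0) (hpos : ∀ u : V, u ≠ depot → 0 < dem u)
    (routes : List (List V))
    (hnd : ∀ c ∈ routes, c.Nodup) (hdep : ∀ c ∈ routes, depot ∉ c)
    (hne : ∀ c ∈ routes, c ≠ [])
    (hcap : ∀ c ∈ routes, (c.map dem).sum ≤ Qcap)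
    (hcover : ∀ u : V, u ≠ depot → (routes.map (fun c => (c.count u : ℤ))).sum = 1)
    (hopt : ∀ c ∈ routes, TSPopt d depot c)
    (p : ℕ) (hp : 2 ≤ p) (v : ℕ → V)
    (hinj : ∀ i j, 1 ≤ i → i ≤ p → 1 ≤ j → j ≤ p → v i = v j → i = j)
    (hmid : ∀ i, 2 ≤ i → i ≤ p - 1 → v i ≠ depot)
    (hviol : TSPviolating d (pathList v p)) :
    (∑ h ∈ Finset.Icc 1 (p - 1), flow depot routes (v h, v (h + 1)))
      + (∑ᶠ a ∈ (⋃ h ∈ Set.Icc 2 p,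
            (deltaEB depot v h p ∪ deltaTSPB d v h p ∪ deltaQB dem Qcap v h p)),
          flow depot routes a)
      ≤ (p : ℤ) - 2 := by
  classical
  set S : Set (V × V) := ⋃ h ∈ Set.Icc 2 p,
      (deltaEB depot v h p ∪ deltaTSPB d v h p ∪ deltaQB dem Qcap v h p) with hSdef
  set A : List (V × V) :=
    (routes.map (fun c => arcsOf (depot :: c ++ [depot]))).flatten with hAdef
  have flow_eq : ∀ a : V × V, flow depot routes a = (A.count a : ℤ) := by
    intro a
    rw [hAdef, List.count_flatten, List.map_map, flow, Nat.cast_list_sum, List.map_map]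
    rfl
  have flow_nonneg : ∀ a, 0 ≤ flow depot routes a := fun a => by
    rw [flow_eq]; positivity
  have hS2 : ∀ a ∈ S, ∃ m, 2 ≤ m ∧ m ≤ p ∧ a.2 = v m ∧
      a ∈ deltaEB depot v m p ∪ deltaTSPB d v m p ∪ deltaQB dem Qcap v m p := by
    intro a ha
    rw [hSdef] at ha
    obtain ⟨m, hm, ha2⟩ := Set.mem_iUnion₂.1 ha
    exact ⟨m, hm.1, hm.2, snd_of_mem_delta ha2, ha2⟩
  have hsupp : (S ∩ Function.support (flow depot routes)).Finite := by
    apply Set.Finite.subset A.toFinset.finite_toSet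
    rintro a ⟨-, ha⟩
    rw [Function.mem_support, flow_eq] at ha
    have h0 : A.count a ≠ 0 := by exact_mod_cast ha
    simpa using List.count_pos_iff.1 (Nat.pos_of_ne_zero h0)
  have hfin : ∑ᶠ a ∈ S, flow depot routes a
      = ∑ a ∈ hsupp.toFinset, flow depot routes a := finsum_mem_eq_sum _ hsupp
  set T : Finset (V × V) := hsupp.toFinset with hTdef
  have hTmem : ∀ a ∈ T, a ∈ S ∧ flow depot routes a ≠ 0 := by
    intro a ha
    rw [hTdef, Set.Finite.mem_toFinset] at ha
    exact ⟨ha.1, ha.2⟩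
  set B : Finset (V × V) := (Finset.Icc 1 (p - 1)).image (fun h => (v h, v (h + 1)))
    with hBdef
  have hBmem : ∀ a ∈ B, ∃ h, 1 ≤ h ∧ h ≤ p - 1 ∧ a = (v h, v (h + 1)) := by
    intro a ha
    rw [hBdef] at ha
    obtain ⟨h, hh, rfl⟩ := Finset.mem_image.1 ha
    rw [Finset.mem_Icc] at hh
    exact ⟨h, hh.1, hh.2, rfl⟩
  have hBsum : ∑ a ∈ B, flow depot routes a
      = ∑ h ∈ Finset.Icc 1 (p - 1), flow depot routes (v h, v (h + 1)) := by
    rw [hBdef]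
    apply Finset.sum_image
    intro x hx y hy hxy
    rw [Finset.mem_coe, Finset.mem_Icc] at hx hy
    exact hinj x y hx.1 (by omega) hy.1 (by omega) (congrArg Prod.fst hxy)
  have hdisjST : ∀ a ∈ B, a ∉ S := by
    intro a haB haS
    obtain ⟨h, hh1, hh2, rfl⟩ := hBmem a haB
    obtain ⟨m, hm1, hm2, hm3, hun⟩ := hS2 _ haS
    have hhm : h + 1 = m := hinj _ _ (by omega) (by omega) (by omega) hm2 hm3
    rcases hun with (h1 | h1) | h1
    · obtain ⟨j, hj1, hj2, heq, hjd⟩ := h1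
      have e1 : v h = v j := congrArg Prod.fst heq
      have : h = j := hinj _ _ (by omega) (by omega) (by omega) hj2 e1
      omega
    · obtain ⟨j, hji, heq, _⟩ := h1
      exact hji h (by omega) (by omega) (congrArg Prod.fst heq).symm
    · obtain ⟨j, hji, heq, _⟩ := h1
      exact hji h (by omega) (by omega) (congrArg Prod.fst heq).symm
  have hdisj : Disjoint B T := by
    rw [Finset.disjoint_left]
    intro a ha haT
    exact hdisjST a ha (hTmem a haT).1
  set W : Finset (V × V) := B ∪ T with hWdef
  have hWc : ∀ a ∈ W, ∃ k, 2 ≤ k ∧ k ≤ p ∧ a.2 = v k := by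
    intro a ha
    rcases Finset.mem_union.1 ha with ha | ha
    · obtain ⟨h, hh1, hh2, rfl⟩ := hBmem a ha
      exact ⟨h + 1, by omega, by omega, rfl⟩
    · obtain ⟨m, hm1, hm2, hm3, _⟩ := hS2 a (hTmem a ha).1
      exact ⟨m, hm1, hm2, hm3⟩
  set g : V × V → ℕ :=
    fun a => if h : ∃ k, 2 ≤ k ∧ k ≤ p ∧ a.2 = v k then h.choose else 0 with hgdef
  have hg : ∀ a ∈ W, 2 ≤ g a ∧ g a ≤ p ∧ a.2 = v (g a) := by
    intro a ha
    have h := hWc a ha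
    simp only [hgdef, dif_pos h]
    exact h.choose_spec
  have hgmem : ∀ a ∈ W, g a ∈ Finset.Icc 2 p := by
    intro a ha
    obtain ⟨h1, h2, _⟩ := hg a ha
    exact Finset.mem_Icc.2 ⟨h1, h2⟩
  have hfiber := Finset.sum_fiberwise_of_maps_to hgmem (flow depot routes)
  have hclass : ∀ k, 2 ≤ k → k ≤ p → ∀ a ∈ W.filter (fun a => g a = k),
      (a = (v (k - 1), v k) ∨
        (a ∈ deltaEB depot v k p ∪ deltaTSPB d v k p ∪ deltaQB dem Qcap v k p ∧
          flow depot routes a ≠ 0)) := by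
    intro k hk1 hk2 a ha
    rw [Finset.mem_filter] at ha
    obtain ⟨haW, hgk⟩ := ha
    obtain ⟨hga1, hga2, hga3⟩ := hg a haW
    rw [hgk] at hga3
    rcases Finset.mem_union.1 haW with haB | haT
    · obtain ⟨h, hh1, hh2, rfl⟩ := hBmem a haB
      left
      have hhk : h + 1 = k := hinj _ _ (by omega) (by omega) (by omega) hk2 hga3
      rw [← hhk, Nat.add_sub_cancel]
    · right
      obtain ⟨m, hm1, hm2, hm3, hun⟩ := hS2 a (hTmem a haT).1
      have hmk : m = k := hinj _ _ (by omega) hm2 (by omega) hk2 (hm3 ▸ hga3)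
      exact ⟨hmk ▸ hun, (hTmem a haT).2⟩
  have hle1 : ∀ k ∈ Finset.Icc 2 p,
      (∑ a ∈ W.filter (fun a => g a = k), flow depot routes a) ≤ 1 := by
    intro k hk
    rw [Finset.mem_Icc] at hk
    obtain ⟨hk1, hk2⟩ := hk
    have hsnd : ∀ a ∈ W.filter (fun a => g a = k), a.2 = v k := by
      intro a ha
      rw [Finset.mem_filter] at ha
      obtain ⟨_, _, hga3⟩ := hg a ha.1
      rw [ha.2] at hga3
      exact hga3
    by_cases hvk : v k = depot
    · -- v k = depot: k = p, only the base arc possible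
      have hkp : k = p := by
        by_contra hnep
        exact hmid k hk1 (by omega) hvk
      subst hkp
      have hvp1 : v (k - 1) ≠ depot := by
        intro h
        have := hinj (k - 1) k (by omega) (by omega) (by omega) le_rfl
          (h.trans hvk.symm)
        omega
      have hFsub : W.filter (fun a => g a = k) ⊆ {(v (k - 1), v k)} := by
        intro a ha
        rw [Finset.mem_singleton]
        rcases hclass k hk1 le_rfl a ha with h1 | ⟨h1, hfl⟩
        · exact h1
        · exfalso
          have hpos' : 0 < flow depot routes a :=
            lt_of_le_of_ne (flow_nonneg a) (Ne.symm hfl)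
          obtain ⟨c, hc, hmem⟩ := exists_route_of_flow_pos hpos'
          rcases h1 with (hE | hT) | hQ
          · obtain ⟨j, hj1, hj2, _, _⟩ := hE; omega
          · obtain ⟨j, _, rfl, hviol2⟩ := hT
            rw [suffixList_last] at hviol2
            exact not_violating_pair d j (v k) hviol2
          · obtain ⟨j, _, rfl, hcap2⟩ := hQ
            have hsub : [j, v k].Sublist (depot :: c ++ [depot]) :=
              (infix_of_mem_arcsOf hmem).sublist
            have hle := cap_contra hdem0 hpos (hcap c hc) hsub
            rw [Finset.Icc_self, Finset.sum_singleton] at hcap2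
            simp only [List.map_cons, List.map_nil, List.sum_cons, List.sum_nil,
              add_zero] at hle
            linarith
      have hb : (∑ a ∈ W.filter (fun a => g a = k), flow depot routes a)
          ≤ flow depot routes (v (k - 1), v k) := by
        calc (∑ a ∈ W.filter (fun a => g a = k), flow depot routes a)
            ≤ ∑ a ∈ {(v (k - 1), v k)}, flow depot routes a :=
              Finset.sum_le_sum_of_subset_of_nonneg hFsub
                (fun a _ _ => flow_nonneg a)
          _ = flow depot routes (v (k - 1), v k) := Finset.sum_singleton _ _
      have e1 : flow depot routes (v (k - 1), v k) ≤ 1 := by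
        rw [flow_eq]
        have e2 : A.count (v (k - 1), v k) ≤ A.countP (fun a => a.1 == v (k - 1)) :=
          count_le_countP A (v (k - 1), v k) (fun a => a.1 == v (k - 1))
            (by rw [beq_iff_eq])
        have e3 : A.countP (fun a => a.1 == v (k - 1)) = 1 := by
          rw [hAdef, List.countP_flatten, List.map_map]
          have e5 : routes.map ((List.countP (fun a : V × V => a.1 == v (k - 1))) ∘
                (fun c => arcsOf (depot :: c ++ [depot])))
              = routes.map (fun c => c.count (v (k - 1))) := by
            apply List.map_congr_left
            intro c hc
            show (arcsOf (depot :: c ++ [depot])).countP _ = _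
            rw [countP_fst_arcsOf]
            rw [show depot :: c ++ [depot] = (depot :: c) ++ [depot] by simp]
            rw [List.dropLast_concat]
            rw [List.count_cons]
            simp [Ne.symm hvp1]
          rw [e5]
          exact sum_nat_eq_one (hcover (v (k - 1)) hvp1)
        omega
      linarith
    · -- v k ≠ depot: in-degree argument
      have e1 : (∑ a ∈ W.filter (fun a => g a = k), flow depot routes a)
          = ((∑ a ∈ W.filter (fun a => g a = k), A.count a : ℕ) : ℤ) := by
        rw [Nat.cast_sum]
        exact Finset.sum_congr rfl fun a _ => flow_eq a
      rw [e1]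
      have e2 : (∑ a ∈ W.filter (fun a => g a = k), A.count a) ≤ 1 := by
        rw [sum_count_eq A (W.filter (fun a => g a = k)), ← List.countP_eq_length_filter]
        have e3 : A.countP (fun x => x ∈ W.filter (fun a => g a = k))
            ≤ A.countP (fun a => a.2 == v k) := by
          apply List.countP_mono_left
          intro x hx hxF
          rw [decide_eq_true_eq] at hxF
          rw [beq_iff_eq]
          exact hsnd x hxF
        have e4 : A.countP (fun a => a.2 == v k) = 1 := by
          rw [hAdef, List.countP_flatten, List.map_map]
          have e5 : routes.map ((List.countP (fun a : V × V => a.2 == v k)) ∘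
                (fun c => arcsOf (depot :: c ++ [depot])))
              = routes.map (fun c => c.count (v k)) := by
            apply List.map_congr_left
            intro c hc
            show (arcsOf (depot :: c ++ [depot])).countP _ = _
            rw [countP_snd_arcsOf]
            show (c ++ [depot]).count (v k) = c.count (v k)
            rw [List.count_append]
            simp [hvk, Ne.symm hvk]
          rw [e5]
          exact sum_nat_eq_one (hcover (v k) hvk)
        omega
      exact_mod_cast e2
  have hexle0 : ∃ k ∈ Finset.Icc 2 p,
      (∑ a ∈ W.filter (fun a => g a = k), flow depot routes a) ≤ 0 := by
    by_contra hcon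
    push_neg at hcon
    apply lifted_used_false d depot dem Qcap hdem0 hpos routes hnd hcap hcover hopt
      p hp v hinj hmid hviol
    intro k hk1 hk2
    have h1 := hcon k (Finset.mem_Icc.2 ⟨hk1, hk2⟩)
    have h2 : ∃ a ∈ W.filter (fun a => g a = k), 0 < flow depot routes a := by
      by_contra h3
      push_neg at h3
      have h4 : (∑ a ∈ W.filter (fun a => g a = k), flow depot routes a) ≤ 0 :=
        Finset.sum_nonpos (fun a ha => h3 a ha)
      linarith
    obtain ⟨a, ha, hfa⟩ := h2
    refine ⟨a, hfa, ?_⟩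
    rcases hclass k hk1 hk2 a ha with h | ⟨h, _⟩
    · exact Or.inl h
    · exact Or.inr h
  rw [hfin, ← hBsum]
  rw [show (T : Finset (V × V)) = hsupp.toFinset from hTdef] at *
  rw [← Finset.sum_union hdisj, ← hfiber]
  obtain ⟨k₀, hk₀, hk₀0⟩ := hexle0
  have hcard : ((Finset.Icc 2 p).erase k₀).card = p - 2 := by
    rw [Finset.card_erase_of_mem hk₀, Nat.card_Icc]
    omega
  calc (∑ k ∈ Finset.Icc 2 p, ∑ a ∈ W.filter (fun a => g a = k), flow depot routes a)
      = (∑ a ∈ W.filter (fun a => g a = k₀), flow depot routes a)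
        + ∑ k ∈ (Finset.Icc 2 p).erase k₀,
            ∑ a ∈ W.filter (fun a => g a = k), flow depot routes a :=
        (Finset.add_sum_erase _ _ hk₀).symm
    _ ≤ 0 + ∑ k ∈ (Finset.Icc 2 p).erase k₀, (1 : ℤ) := by
        apply add_le_add hk₀0
        exact Finset.sum_le_sum fun k hk => hle1 k (Finset.mem_of_mem_erase hk)
    _ = (((Finset.Icc 2 p).erase k₀).card : ℤ) := by
        rw [zero_add, Finset.sum_const, nsmul_eq_mul, mul_one]
    _ ≤ (p : ℤ) - 2 := by
        rw [hcard]
        omega
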